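/- (Theorem 1) Let (A, B, u_O, u_L) be a finite two-player bimatrix game with |u_O(a,b)| ≤ 1 and |u_L(a,b)| ≤ 1 for all a, b, in which no action of the learner is weakly dominated, and let V be its Stackelberg value. Then for every ε > 0 there exist a mixed strategy α* ∈ Δ(A) and a constant c ≥ 0 such that for every horizon T ≥ 1 and every sequence p_1, …, p_T ∈ Δ(B) of mixed plays of the learner, letting R = max_{b' ∈ B} (T·u_L(α*, b') − Σ_{t=1}^T u_L(α*, p_t)) be the learner's regret when the optimizer plays α* every round, the optimizer's total utility satisfies Σ_{t=1}^T u_O(α*, p_t) ≥ (V − ε)·T − c·R. -/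

import Mathlib

open Finset

/-- A probability distribution (mixed strategy) on a finite type. -/
def IsDist {X : Type*} [Fintype X] (f : X → ℝ) : Prop :=
  (∀ x, 0 ≤ f x) ∧ ∑ x, f x = 1

/-- The set of optimizer utilities `u_O(α, b)` over pairs where `b` is a best
response to `α`; the Stackelberg value is its greatest element. -/
def StackSet {A B : Type*} [Fintype A] [Fintype B] (uO uL : A → B → ℝ) : Set ℝ :=
  {v | ∃ (α : A → ℝ) (b : B), IsDist α ∧
    (∀ b' : B, ∑ a, α a * uL a b' ≤ ∑ a, α a * uL a b) ∧
    v = ∑ a, α a * uO a b}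

theorem exists_strict_br {A B : Type*} [Fintype A] [Fintype B] [Nonempty A]
    (uL : A → B → ℝ) (b₀ : B)
    (hnd : ¬ ∃ β : B → ℝ, IsDist β ∧ β b₀ = 0 ∧
      ∀ a : A, uL a b₀ ≤ ∑ b', β b' * uL a b') :
    ∃ (α : A → ℝ) (δ : ℝ), IsDist α ∧ 0 < δ ∧
      ∀ b', b' ≠ b₀ → ∑ a, α a * uL a b' + δ ≤ ∑ a, α a * uL a b₀ := by
  classical
  by_cases hb : ∃ b₁ : B, b₁ ≠ b₀
  swap
  · refine ⟨fun _ => (Fintype.card A : ℝ)⁻¹, 1, ⟨fun _ => by positivity, ?_⟩, one_pos,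
      fun b' hb' => absurd rfl (by push_neg at hb; rw [hb b'] at hb'; exact hb')⟩
    rw [Finset.sum_const, card_univ, nsmul_eq_mul]
    have : (0:ℝ) < Fintype.card A := by exact_mod_cast Fintype.card_pos
    field_simp
  obtain ⟨b₁, hb₁⟩ := hb
  set L : (B → ℝ) →ₗ[ℝ] (A → ℝ) :=
    { toFun := fun β a => ∑ b', β b' * (uL a b' - uL a b₀)
      map_add' := by
        intro x y; funext a
        simp [add_mul, Finset.sum_add_distrib]
      map_smul' := by
        intro c x; funext a
        simp [Finset.mul_sum, mul_assoc] } with hLdef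
  have hLapp : ∀ (β : B → ℝ) (a : A), L β a = ∑ b', β b' * (uL a b' - uL a b₀) := fun _ _ => rfl
  set K : Set (B → ℝ) := {β | IsDist β ∧ β b₀ = 0} with hK
  have hKconv : Convex ℝ K := by
    have h1 : Convex ℝ (stdSimplex ℝ B) := convex_stdSimplex ℝ B
    have h2 : Convex ℝ {β : B → ℝ | β b₀ = 0} := by
      intro x hx y hy s t hs ht hst
      simp only [Set.mem_setOf_eq] at *
      simp [hx, hy]
    have : K = stdSimplex ℝ B ∩ {β : B → ℝ | β b₀ = 0} := rfl
    rw [this]; exact h1.inter h2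
  have hKcomp : IsCompact K := by
    have : K = stdSimplex ℝ B ∩ {β : B → ℝ | β b₀ = 0} := rfl
    rw [this]
    exact (isCompact_stdSimplex ℝ B).inter_right (isClosed_eq (continuous_apply b₀) continuous_const)
  set Q : Set (A → ℝ) := {x | ∀ a, 0 ≤ x a} with hQ
  have hQconv : Convex ℝ Q := by
    intro x hx y hy s t hs ht hst a
    exact add_nonneg (mul_nonneg hs (hx a)) (mul_nonneg ht (hy a))
  have hQclosed : IsClosed Q := by
    have : Q = ⋂ a, {x : A → ℝ | 0 ≤ x a} := by ext x; simp [hQ]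
    rw [this]
    exact isClosed_iInter fun a => isClosed_le continuous_const (continuous_apply a)
  have hsum : ∀ (β : B → ℝ), (∑ b', β b' = 1) → ∀ a,
      ∑ b', β b' * (uL a b' - uL a b₀) = (∑ b', β b' * uL a b') - uL a b₀ := by
    intro β hβ a
    simp [mul_sub, Finset.sum_sub_distrib, ← Finset.sum_mul, hβ]
  have hdisj : Disjoint (L '' K) Q := by
    rw [Set.disjoint_left]
    rintro x ⟨β, hβ, rfl⟩ hxQ
    refine hnd ⟨β, hβ.1, hβ.2, fun a => ?_⟩
    have := hxQ a
    rw [hLapp, hsum β hβ.1.2 a] at this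
    linarith
  obtain ⟨f, u, v, hfu, huv, hfv⟩ :=
    geometric_hahn_banach_compact_closed (hKconv.linear_image L)
      (hKcomp.image L.continuous_of_finiteDimensional) hQconv hQclosed hdisj
  have hv0 : v < 0 := by
    have := hfv 0 (fun a => le_refl 0)
    simpa using this
  have hu0 : u < 0 := huv.trans hv0
  -- coordinates of f
  set w : A → ℝ := fun a => f (fun j => if a = j then (1:ℝ) else 0) with hw
  have hwpos : ∀ a, 0 ≤ w a := by
    intro a
    by_contra hwa
    push_neg at hwa
    set t : ℝ := (2 * v) / (w a) with ht
    have htpos : 0 < t := div_pos_of_neg_of_neg (by linarith) hwa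
    have hmem : (t • fun j => if a = j then (1:ℝ) else 0) ∈ Q := by
      intro j
      simp only [Pi.smul_apply, smul_eq_mul]
      by_cases h : a = j <;> simp [h, le_of_lt htpos]
    have := hfv _ hmem
    have heq : f (fun j => if a = j then (1:ℝ) else 0) = w a := rfl
    rw [map_smul, smul_eq_mul, heq, ht, div_mul_cancel₀ _ (ne_of_lt hwa)] at this
    linarith
  have hfx : ∀ x : A → ℝ, f x = ∑ a, x a * w a := by
    intro x
    conv_lhs => rw [pi_eq_sum_univ x]
    rw [map_sum]
    exact Finset.sum_congr rfl fun a _ => by rw [map_smul, smul_eq_mul]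
  -- the point for b₁ shows ∑ w > 0
  have hsingle : ∀ b', b' ≠ b₀ → Pi.single b' (1:ℝ) ∈ K := by
    intro b' hb'
    refine ⟨⟨fun x => ?_, ?_⟩, ?_⟩
    · by_cases h : x = b' <;> simp [Pi.single_apply, h]
    · simp [Pi.single_apply]
    · simp [Pi.single_apply, (Ne.symm hb')]
  have hLsingle : ∀ (b' : B) (a : A), L (Pi.single b' (1:ℝ)) a = uL a b' - uL a b₀ := by
    intro b' a
    rw [hLapp]
    rw [Finset.sum_eq_single b']
    · simp
    · intro x _ hx; simp [Pi.single_apply, hx]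
    · simp
  have hfL : ∀ b', b' ≠ b₀ → ∑ a, (uL a b' - uL a b₀) * w a < u := by
    intro b' hb'
    have := hfu _ ⟨Pi.single b' 1, hsingle b' hb', rfl⟩
    rw [hfx] at this
    calc ∑ a, (uL a b' - uL a b₀) * w a
        = ∑ a, L (Pi.single b' (1:ℝ)) a * w a :=
          Finset.sum_congr rfl fun a _ => by rw [hLsingle]
      _ < u := this
  set N : ℝ := ∑ a, w a with hN
  have hN0 : 0 ≤ N := Finset.sum_nonneg fun a _ => hwpos a
  have hNpos : 0 < N := by
    rcases hN0.lt_or_eq with h | h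
    · exact h
    · exfalso
      have hz : ∀ a ∈ univ, w a = 0 :=
        (Finset.sum_eq_zero_iff_of_nonneg (fun a _ => hwpos a)).1 h.symm
      have := hfL b₁ hb₁
      rw [Finset.sum_congr rfl (fun a _ => by rw [hz a (mem_univ a), mul_zero])] at this
      simp at this
      linarith
  refine ⟨fun a => w a / N, (-u) / N, ⟨fun a => div_nonneg (hwpos a) hN0, ?_⟩,
    div_pos (by linarith) hNpos, ?_⟩
  · rw [← Finset.sum_div, ← hN, div_self (ne_of_gt hNpos)]
  · intro b' hb'
    have h1 := (hfL b' hb').le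
    have h2 : (∑ a, (uL a b' - uL a b₀) * w a) / N ≤ u / N :=
      (div_le_div_iff_of_pos_right hNpos).mpr h1
    have e : ∑ a, (w a / N) * uL a b' - ∑ a, (w a / N) * uL a b₀
        = (∑ a, (uL a b' - uL a b₀) * w a) / N := by
      rw [← Finset.sum_sub_distrib, Finset.sum_div]
      exact Finset.sum_congr rfl fun a _ => by ring
    beta_reduce
    rw [neg_div]
    linarith


theorem abs_dist_sum_le {A : Type*} [Fintype A] (α : A → ℝ) (hα : IsDist α)
    (g : A → ℝ) (hg : ∀ a, |g a| ≤ 1) : |∑ a, α a * g a| ≤ 1 := by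
  calc |∑ a, α a * g a| ≤ ∑ a, |α a * g a| := Finset.abs_sum_le_sum_abs _ _
    _ ≤ ∑ a, α a := Finset.sum_le_sum fun a _ => by
        rw [abs_mul, abs_of_nonneg (hα.1 a)]
        exact mul_le_of_le_one_right (hα.1 a) (hg a)
    _ = 1 := hα.2

theorem stmt2 {A B : Type*} [Fintype A] [Fintype B] [Nonempty A] [Nonempty B]
    (uO uL : A → B → ℝ) (hO : ∀ a b, |uO a b| ≤ 1) (hL : ∀ a b, |uL a b| ≤ 1)
    (hnd : ∀ b : B, ¬ ∃ β : B → ℝ, IsDist β ∧ β b = 0 ∧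
      ∀ a : A, uL a b ≤ ∑ b', β b' * uL a b')
    (V : ℝ) (hV : IsGreatest (StackSet uO uL) V)
    (ε : ℝ) (hε : 0 < ε) :
    ∃ (α : A → ℝ) (c : ℝ), IsDist α ∧ 0 ≤ c ∧
      ∀ (T : ℕ), 1 ≤ T → ∀ p : Fin T → B → ℝ, (∀ t, IsDist (p t)) →
        ∑ t : Fin T, ∑ b', p t b' * ∑ a, α a * uO a b'
          ≥ (V - ε) * T - c * (univ.sup' univ_nonempty fun b' : B =>
              (T : ℝ) * (∑ a, α a * uL a b')
                - ∑ t : Fin T, ∑ b'', p t b'' * ∑ a, α a * uL a b'') := by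
  classical
  obtain ⟨α₀, b₀, hα₀, hbr, hVeq⟩ := hV.1
  obtain ⟨α₁, δ, hα₁, hδ, hgap⟩ := exists_strict_br uL b₀ (hnd b₀)
  set l : ℝ := min (ε / 2) (1 / 2) with hl
  have hl0 : 0 < l := lt_min (by linarith) (by norm_num)
  have hl1 : l ≤ 1 / 2 := min_le_right _ _
  have hlε : 2 * l ≤ ε := by
    have := min_le_left (ε / 2) (1 / 2); linarith [this]
  set α : A → ℝ := fun a => (1 - l) * α₀ a + l * α₁ a with hα
  have hαdist : IsDist α := by
    constructor
    · intro a
      exact add_nonneg (mul_nonneg (by linarith) (hα₀.1 a)) (mul_nonneg hl0.le (hα₁.1 a))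
    · rw [Finset.sum_add_distrib, ← Finset.mul_sum, ← Finset.mul_sum, hα₀.2, hα₁.2]; ring
  have hmix : ∀ (u : A → B → ℝ) (b' : B),
      ∑ a, α a * u a b' = (1 - l) * ∑ a, α₀ a * u a b' + l * ∑ a, α₁ a * u a b' := by
    intro u b'
    rw [Finset.mul_sum, Finset.mul_sum, ← Finset.sum_add_distrib]
    exact Finset.sum_congr rfl fun a _ => by simp only [hα]; ring
  set δ' : ℝ := l * δ with hδ'
  have hδ'0 : 0 < δ' := mul_pos hl0 hδ
  set c : ℝ := 2 / δ' with hc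
  have hc0 : 0 ≤ c := le_of_lt (div_pos two_pos hδ'0)
  set SO : B → ℝ := fun b' => ∑ a, α a * uO a b' with hSO
  set SL : B → ℝ := fun b' => ∑ a, α a * uL a b' with hSL
  -- value of α at b₀
  have hVlow : V - ε ≤ SO b₀ := by
    have h0 : |∑ a, α₀ a * uO a b₀| ≤ 1 := abs_dist_sum_le α₀ hα₀ _ (fun a => hO a b₀)
    have h1 : |∑ a, α₁ a * uO a b₀| ≤ 1 := abs_dist_sum_le α₁ hα₁ _ (fun a => hO a b₀)
    rw [hSO]
    beta_reduce
    rw [hmix uO b₀, ← hVeq]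
    rw [abs_le] at h0 h1
    nlinarith [h0.1, h0.2, h1.1, h1.2]
  -- strict best response gap for the mixture
  have hgap' : ∀ b', b' ≠ b₀ → SL b' + δ' ≤ SL b₀ := by
    intro b' hb'
    simp only [hSL]
    rw [hmix uL b', hmix uL b₀]
    have h1 := hbr b'
    have h2 := hgap b' hb'
    nlinarith [h1, h2, hl0.le, hl1]
  -- key pointwise inequality
  have hkey : ∀ b', SO b₀ - c * (SL b₀ - SL b') ≤ SO b' := by
    intro b'
    by_cases hb' : b' = b₀
    · subst hb'; simp
    · have h1 : δ' ≤ SL b₀ - SL b' := by linarith [hgap' b' hb']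
      have h2 : (2 : ℝ) ≤ c * (SL b₀ - SL b') := by
        rw [hc]
        calc (2:ℝ) = (2 / δ') * δ' := by field_simp
          _ ≤ (2 / δ') * (SL b₀ - SL b') := by
              apply mul_le_mul_of_nonneg_left h1 (le_of_lt (div_pos two_pos hδ'0))
      have h3 : |SO b₀| ≤ 1 := abs_dist_sum_le α hαdist _ (fun a => hO a b₀)
      have h4 : |SO b'| ≤ 1 := abs_dist_sum_le α hαdist _ (fun a => hO a b')
      rw [abs_le] at h3 h4
      linarith [h3.2, h4.1]
  refine ⟨α, c, hαdist, hc0, ?_⟩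
  intro T hT p hp
  set R : ℝ := univ.sup' univ_nonempty fun b' : B =>
      (T : ℝ) * SL b' - ∑ t : Fin T, ∑ b'', p t b'' * SL b'' with hR
  set G : ℝ := (T : ℝ) * SL b₀ - ∑ t : Fin T, ∑ b'', p t b'' * SL b'' with hG
  have hGR : G ≤ R := by
    have h := Finset.le_sup' (fun b' : B =>
      (T : ℝ) * SL b' - ∑ t : Fin T, ∑ b'', p t b'' * SL b'') (mem_univ b₀)
    exact h
  have hmain : (V - ε) * T - c * G ≤ ∑ t : Fin T, ∑ b', p t b' * SO b' := by
    have step1 : ∀ t : Fin T, SO b₀ - c * SL b₀ + c * ∑ b', p t b' * SL b'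
        ≤ ∑ b', p t b' * SO b' := by
      intro t
      have e1 : SO b₀ - c * SL b₀ + c * ∑ b', p t b' * SL b'
          = ∑ b', p t b' * (SO b₀ - c * (SL b₀ - SL b')) := by
        have : ∀ b', p t b' * (SO b₀ - c * (SL b₀ - SL b'))
            = p t b' * (SO b₀ - c * SL b₀) + c * (p t b' * SL b') := fun b' => by ring
        rw [Finset.sum_congr rfl fun b' _ => this b', Finset.sum_add_distrib,
          ← Finset.sum_mul, (hp t).2, one_mul, ← Finset.mul_sum]
      rw [e1]
      exact Finset.sum_le_sum fun b' _ =>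
        mul_le_mul_of_nonneg_left (hkey b') ((hp t).1 b')
    calc (V - ε) * T - c * G
        ≤ (SO b₀) * T - c * G := by
          have hT0 : (0:ℝ) ≤ T := Nat.cast_nonneg T
          nlinarith [hVlow, hT0]
      _ = ∑ _t : Fin T, (SO b₀ - c * SL b₀) + c * ∑ t : Fin T, ∑ b', p t b' * SL b' := by
          rw [Finset.sum_const, card_univ, Fintype.card_fin, nsmul_eq_mul, hG]
          ring
      _ = ∑ t : Fin T, (SO b₀ - c * SL b₀ + c * ∑ b', p t b' * SL b') := by
          rw [Finset.sum_add_distrib, ← Finset.mul_sum]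
      _ ≤ ∑ t : Fin T, ∑ b', p t b' * SO b' := Finset.sum_le_sum fun t _ => step1 t
  have : c * G ≤ c * R := mul_le_mul_of_nonneg_left hGR hc0
  calc ∑ t : Fin T, ∑ b', p t b' * SO b'
      ≥ (V - ε) * T - c * G := hmain
    _ ≥ (V - ε) * T - c * R := by linarith
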